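/- Define p_t(x,E) = (Z_t * 1_E)(x) for t > 0 and p_0(x,E) = 1_E(x), for Borel sets E ⊆ ℚ_p^n. Then p_t is a Markov transition function: (a) p_t(x,·) is a measure with p_t(x, ℚ_p^n) = 1; (b) p_t(·,E) is Borel measurable; (c) p_0(x,{x}) = 1; and (d) the Chapman–Kolmogorov equation p_{t+s}(x,E) = ∫_{ℚ_p^n} p_t(x, d^n y) p_s(y, E) holds for all t, s ≥ 0. -/

import Mathlib

open MeasureTheory

variable {p : ℕ} [Fact p.Prime] [MeasurableSpace ℚ_[p]] [BorelSpace ℚ_[p]] {n : ℕ}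

/-- The transition function `p_t(x,E) = (Z_t * 1_E)(x)` for `t > 0`, `p_0(x,E) = 1_E(x)`. -/
noncomputable def transFn (μ : Measure (Fin n → ℚ_[p])) (Z : ℝ → (Fin n → ℚ_[p]) → ℝ)
    (t : ℝ) (x : Fin n → ℚ_[p]) (E : Set (Fin n → ℚ_[p])) : ℝ :=
  if t = 0 then Set.indicator E (fun _ => (1 : ℝ)) x else ∫ y in E, Z t (x - y) ∂μ

/-- `p_t(x,E) = (Z_t * 1_E)(x)` (with `p_0(x,E) = 1_E(x)`) is a Markov transition function:
`p_t(x,·)` is a (probability) measure, `p_t(·,E)` is Borel measurable, `p_0(x,{x}) = 1`,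
and the Chapman–Kolmogorov equation holds for all `t, s ≥ 0`. -/
theorem transFn_isMarkovTransitionFunction
    (μ : Measure (Fin n → ℚ_[p])) [μ.IsAddHaarMeasure]
    (Z : ℝ → (Fin n → ℚ_[p]) → ℝ)
    (hpos : ∀ t : ℝ, 0 < t → ∀ x, 0 ≤ Z t x)
    (hcont : ∀ t : ℝ, 0 < t → Continuous (Z t))
    (hint : ∀ t : ℝ, 0 < t → Integrable (Z t) μ)
    (hone : ∀ t : ℝ, 0 < t → ∫ x, Z t x ∂μ = 1)
    (hCK : ∀ t s : ℝ, 0 < t → 0 < s → ∀ x : Fin n → ℚ_[p],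
      Z (t + s) x = ∫ y, Z t (x - y) * Z s y ∂μ) :
    -- (a) `p_t(x,·)` is a measure with total mass `1`
    (∀ t : ℝ, 0 ≤ t → ∀ x : Fin n → ℚ_[p],
      (∀ E : Set (Fin n → ℚ_[p]), 0 ≤ transFn μ Z t x E) ∧
      transFn μ Z t x Set.univ = 1 ∧
      (∀ E : ℕ → Set (Fin n → ℚ_[p]), (∀ i, MeasurableSet (E i)) →
        Pairwise (Function.onFun Disjoint E) →
        transFn μ Z t x (⋃ i, E i) = ∑' i, transFn μ Z t x (E i))) ∧
    -- (b) `p_t(·,E)` is Borel measurable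
    (∀ t : ℝ, 0 ≤ t → ∀ E : Set (Fin n → ℚ_[p]), MeasurableSet E →
      Measurable (fun x => transFn μ Z t x E)) ∧
    -- (c) `p_0(x,{x}) = 1`
    (∀ x : Fin n → ℚ_[p], transFn μ Z 0 x {x} = 1) ∧
    -- (d) Chapman–Kolmogorov: `p_{t+s}(x,E) = ∫ p_t(x,dy) p_s(y,E)`
    (∀ t s : ℝ, 0 ≤ t → 0 ≤ s → ∀ x : Fin n → ℚ_[p],
      ∀ E : Set (Fin n → ℚ_[p]), MeasurableSet E →
      transFn μ Z (t + s) x E =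
        if t = 0 then transFn μ Z s x E
        else ∫ y, Z t (x - y) * transFn μ Z s y E ∂μ) := by
  -- Integrability of the translated kernel
  have hZint : ∀ t : ℝ, 0 < t → ∀ x : Fin n → ℚ_[p],
      Integrable (fun y => Z t (x - y)) μ := fun t ht x => (hint t ht).comp_sub_left x
  have hZone : ∀ t : ℝ, 0 < t → ∀ x : Fin n → ℚ_[p],
      ∫ y, Z t (x - y) ∂μ = 1 := by
    intro t ht x
    rw [integral_sub_left_eq_self (Z t) μ x]
    exact hone t ht
  have h0eq : ∀ (x : Fin n → ℚ_[p]) (E : Set (Fin n → ℚ_[p])),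
      transFn μ Z 0 x E = Set.indicator E (fun _ => (1 : ℝ)) x := fun x E => if_pos rfl
  refine ⟨?_, ?_, ?_, ?_⟩
  · -- (a)
    intro t ht x
    rcases eq_or_lt_of_le ht with h0 | h0
    · subst h0
      refine ⟨fun E => ?_, ?_, ?_⟩
      · rw [h0eq]
        exact Set.indicator_nonneg (fun _ _ => zero_le_one) x
      · simp [transFn]
      · intro E hE hd
        simp only [h0eq]
        by_cases hx : x ∈ ⋃ i, E i
        · obtain ⟨i, hi⟩ := Set.mem_iUnion.mp hx
          rw [Set.indicator_of_mem hx]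
          rw [tsum_eq_single i]
          · rw [Set.indicator_of_mem hi]
          · intro j hj
            refine Set.indicator_of_notMem (fun hxj => ?_) _
            exact (hd (hj : j ≠ i)).ne_of_mem hxj hi rfl
        · rw [Set.indicator_of_notMem hx]
          have : ∀ i, Set.indicator (E i) (fun _ => (1 : ℝ)) x = 0 := fun i =>
            Set.indicator_of_notMem (fun hxi => hx (Set.mem_iUnion.mpr ⟨i, hxi⟩)) _
          simp [this]
    · refine ⟨fun E => ?_, ?_, ?_⟩
      · simp only [transFn, if_neg h0.ne']
        exact integral_nonneg fun y => hpos t h0 _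
      · simp only [transFn, if_neg h0.ne', Measure.restrict_univ]
        exact hZone t h0 x
      · intro E hE hd
        simp only [transFn, if_neg h0.ne']
        exact integral_iUnion hE hd (hZint t h0 x).integrableOn
  · -- (b)
    intro t ht E hE
    rcases eq_or_lt_of_le ht with h0 | h0
    · subst h0
      simp only [transFn, if_pos rfl]
      exact measurable_const.indicator hE
    · simp only [transFn, if_neg h0.ne']
      have hcts : Continuous fun q : (Fin n → ℚ_[p]) × (Fin n → ℚ_[p]) => Z t (q.1 - q.2) :=
        (hcont t h0).comp (continuous_fst.sub continuous_snd)
      exact (hcts.stronglyMeasurable.integral_prod_right'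
        (ν := μ.restrict E)).measurable
  · -- (c)
    simp [transFn]
  · -- (d)
    intro t s ht hs x E hE
    rcases eq_or_lt_of_le ht with h0 | h0
    · subst h0
      rw [if_pos rfl, zero_add]
    · rw [if_neg h0.ne']
      rcases eq_or_lt_of_le hs with hs0 | hs0
      · subst hs0
        have : ∀ y, Z t (x - y) * transFn μ Z 0 y E
            = Set.indicator E (fun y => Z t (x - y)) y := by
          intro y
          simp only [transFn, if_pos rfl]
          by_cases hy : y ∈ E <;> simp [hy]
        simp only [this]
        rw [integral_indicator hE]
        simp only [transFn, if_neg (by linarith : t + 0 ≠ 0)]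
        norm_num
      · -- t > 0, s > 0 : genuine Chapman–Kolmogorov
        have hts : t + s ≠ 0 := by positivity
        simp only [transFn, if_neg hs0.ne', if_neg hts]
        -- integrability of (y, z) ↦ Z t (x - y) * Z s (y - z) on μ.prod (μ.restrict E)
        have hT : MeasurePreserving
            (fun q : (Fin n → ℚ_[p]) × (Fin n → ℚ_[p]) => (q.1, q.1 - q.2))
            (μ.prod μ) (μ.prod μ) := by
          have h1 : MeasurePreserving
              (fun q : (Fin n → ℚ_[p]) × (Fin n → ℚ_[p]) => (q.1, -q.2))
              (μ.prod μ) (μ.prod μ) :=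
            (MeasurePreserving.id μ).prod (Measure.measurePreserving_neg μ)
          have h2 := measurePreserving_prod_add (μ := μ) (ν := μ)
          have := h2.comp h1
          simpa [Function.comp_def, sub_eq_add_neg] using this
        have hh : Integrable
            (fun q : (Fin n → ℚ_[p]) × (Fin n → ℚ_[p]) => Z t (x - q.1) * Z s q.2)
            (μ.prod μ) := (hZint t h0 x).mul_prod (hint s hs0)
        have hgprod : Integrable
            (fun q : (Fin n → ℚ_[p]) × (Fin n → ℚ_[p]) => Z t (x - q.1) * Z s (q.1 - q.2))
            (μ.prod μ) := by
          have := (hT.integrable_comp hh.aestronglyMeasurable).mpr hh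
          simpa [Function.comp_def] using this
        have hg : Integrable
            (fun q : (Fin n → ℚ_[p]) × (Fin n → ℚ_[p]) => Z t (x - q.1) * Z s (q.1 - q.2))
            (μ.prod (μ.restrict E)) := by
          have hrestr : μ.prod (μ.restrict E)
              = (μ.prod μ).restrict (Set.univ ×ˢ E) := by
            rw [← Measure.prod_restrict, Measure.restrict_univ]
          rw [hrestr]
          exact hgprod.restrict
        calc ∫ y in E, Z (t + s) (x - y) ∂μ
            = ∫ z in E, ∫ y, Z t (x - y) * Z s (y - z) ∂μ ∂μ := by
              refine setIntegral_congr_fun hE fun z _ => ?_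
              rw [hCK t s h0 hs0 (x - z)]
              rw [← integral_add_right_eq_self (fun y => Z t (x - y) * Z s (y - z)) z]
              congr 1 with y
              congr 2 <;> abel
          _ = ∫ y, ∫ z in E, Z t (x - y) * Z s (y - z) ∂μ ∂μ :=
              (integral_integral_swap hg).symm
          _ = ∫ y, Z t (x - y) * ∫ z in E, Z s (y - z) ∂μ ∂μ := by
              congr 1 with y
              exact integral_const_mul _ _
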